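/- Fix α ∈ [1/2, ∞) and n ≥ 1. There is a constant C independent of c ≥ 1 such that for all j ∈ ℤⁿ∖{0} and ξ ∈ (-π,π)ⁿ, the quotient M_{j,c}(ξ) = (‖ξ‖/‖ξ+2πj‖)^{-α-n/2} K_{α+n/2}(c‖ξ+2πj‖)/K_{α+n/2}(c‖ξ‖) satisfies M_{j,c}(ξ) ≤ C (‖ξ‖/‖ξ+2πj‖)^{-α-(n-1)/2} e^{c(‖ξ‖ − ‖ξ+2πj‖)}, and hence M_{j,c}(ξ) → 0 as c → ∞ for each fixed such j and ξ. -/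

import Mathlib

open Filter Real

noncomputable section

def lat (n : ℕ) (j : Fin n → ℤ) : EuclideanSpace ℝ (Fin n) := WithLp.toLp 2 (fun i => (j i : ℝ))

/-- The modified Bessel function of the second kind,
`K_β(r) = (1/2) ∫_ℝ e^{-r cosh t} e^{βt} dt`. -/
def besselK (β r : ℝ) : ℝ :=
  (1 / 2) * ∫ t : ℝ, Real.exp (-r * Real.cosh t) * Real.exp (β * t)

open MeasureTheory

lemma cosh_quad (t : ℝ) : 1 + t ^ 2 / 2 ≤ Real.cosh t := by
  have h1 : Real.cosh t = 1 + 2 * Real.sinh (t / 2) ^ 2 := by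
    have := Real.cosh_two_mul (t / 2)
    have h2 := Real.cosh_sq (t / 2)
    rw [show 2 * (t / 2) = t by ring] at this
    rw [this, h2]; ring
  have h3 : (t / 2) ^ 2 ≤ Real.sinh (t / 2) ^ 2 := by
    rw [← sq_abs (t/2), ← sq_abs (Real.sinh (t/2)), Real.abs_sinh]
    have := Real.self_le_sinh_iff.2 (abs_nonneg (t/2))
    nlinarith [abs_nonneg (t/2)]
  nlinarith

lemma integrable_kernel {r : ℝ} (hr : 0 < r) (γ : ℝ) :
    Integrable (fun t : ℝ => Real.exp (-r * Real.cosh t) * Real.exp (γ * t)) := by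
  have hg : Integrable (fun t : ℝ =>
      Real.exp (γ ^ 2 / (2 * r) - r) * Real.exp (-(r / 2) * (t - γ / r) ^ 2)) := by
    exact ((integrable_exp_neg_mul_sq (by positivity : (0:ℝ) < r / 2)).comp_sub_right
      (γ / r)).const_mul _
  refine hg.mono' (Continuous.aestronglyMeasurable (by continuity)) ?_
  filter_upwards with t
  rw [Real.norm_eq_abs, abs_of_nonneg (by positivity), ← Real.exp_add, ← Real.exp_add]
  apply Real.exp_le_exp.2
  have h := cosh_quad t
  have hr' : r ≠ 0 := hr.ne'
  have key : γ ^ 2 / (2 * r) - r + -(r / 2) * (t - γ / r) ^ 2 = -(r/2) * t^2 + γ * t - r := by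
    field_simp; ring
  rw [key]; nlinarith

lemma besselK_nonneg (β r : ℝ) : 0 ≤ besselK β r := by
  unfold besselK
  have : 0 ≤ ∫ t : ℝ, Real.exp (-r * Real.cosh t) * Real.exp (β * t) :=
    integral_nonneg fun t => by positivity
  linarith

lemma besselK_upper {r : ℝ} (hr : 0 < r) (β : ℝ) :
    besselK β r ≤ Real.sqrt (π / (2 * r)) * Real.exp (β ^ 2 / (2 * r) - r) := by
  unfold besselK
  have h1 : (∫ t : ℝ, Real.exp (-r * Real.cosh t) * Real.exp (β * t)) ≤
      ∫ t : ℝ, Real.exp (β ^ 2 / (2 * r) - r) * Real.exp (-(r / 2) * (t - β / r) ^ 2) := by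
    refine integral_mono (integrable_kernel hr β)
      (((integrable_exp_neg_mul_sq (by positivity : (0:ℝ) < r / 2)).comp_sub_right
        (β / r)).const_mul _) fun t => ?_
    rw [← Real.exp_add, ← Real.exp_add]
    apply Real.exp_le_exp.2
    have key : β ^ 2 / (2 * r) - r + -(r / 2) * (t - β / r) ^ 2 = -(r/2) * t^2 + β * t - r := by
      field_simp; ring
    rw [key]; nlinarith [cosh_quad t]
  have h2 : (∫ t : ℝ, Real.exp (β ^ 2 / (2 * r) - r) * Real.exp (-(r / 2) * (t - β / r) ^ 2)) =
      Real.exp (β ^ 2 / (2 * r) - r) * Real.sqrt (π / (r / 2)) := by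
    rw [MeasureTheory.integral_const_mul]
    congr 1
    rw [show (fun t : ℝ => Real.exp (-(r / 2) * (t - β / r) ^ 2)) =
      (fun t : ℝ => (fun s => Real.exp (-(r / 2) * s ^ 2)) (t - β / r)) from rfl]
    rw [integral_sub_right_eq_self (fun s : ℝ => Real.exp (-(r / 2) * s ^ 2)) (β / r)]
    exact integral_gaussian (r / 2)
  have h3 : Real.sqrt (π / (r / 2)) = 2 * Real.sqrt (π / (2 * r)) := by
    rw [show π / (r / 2) = 4 * (π / (2 * r)) by field_simp; ring, show (4:ℝ) = 2^2 by norm_num,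
      Real.sqrt_mul (by positivity), Real.sqrt_sq (by norm_num)]
  calc (1/2) * (∫ t : ℝ, Real.exp (-r * Real.cosh t) * Real.exp (β * t))
      ≤ (1/2) * (Real.exp (β ^ 2 / (2 * r) - r) * Real.sqrt (π / (r / 2))) := by
        rw [← h2]; linarith
    _ = Real.sqrt (π / (2 * r)) * Real.exp (β ^ 2 / (2 * r) - r) := by rw [h3]; ring

lemma kernel_symm {r : ℝ} (hr : 0 < r) (β : ℝ) :
    besselK β r = (1 / 2) * ∫ t : ℝ, Real.exp (-r * Real.cosh t) * Real.cosh (β * t) := by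
  unfold besselK
  have h1 : (∫ t : ℝ, Real.exp (-r * Real.cosh t) * Real.exp (-β * t)) =
      ∫ t : ℝ, Real.exp (-r * Real.cosh t) * Real.exp (β * t) := by
    rw [← MeasureTheory.integral_neg_eq_self
      (fun s => Real.exp (-r * Real.cosh s) * Real.exp (β * s)) (μ := volume)]
    congr 1; funext t; simp [Real.cosh_neg, mul_neg, neg_mul]
  have h2 : (∫ t : ℝ, Real.exp (-r * Real.cosh t) * Real.cosh (β * t)) =
      (1/2) * ((∫ t : ℝ, Real.exp (-r * Real.cosh t) * Real.exp (β * t)) +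
        ∫ t : ℝ, Real.exp (-r * Real.cosh t) * Real.exp (-β * t)) := by
    rw [← MeasureTheory.integral_add (integrable_kernel hr β) (integrable_kernel hr (-β)),
      ← MeasureTheory.integral_const_mul]
    congr 1; funext t; rw [Real.cosh_eq (β * t)]; ring
  rw [h2, h1]; ring

lemma integrable_kernel_cosh {r : ℝ} (hr : 0 < r) (γ : ℝ) :
    Integrable (fun t : ℝ => Real.exp (-r * Real.cosh t) * Real.cosh (γ * t)) := by
  have : (fun t : ℝ => Real.exp (-r * Real.cosh t) * Real.cosh (γ * t)) =
      (fun t : ℝ => (1/2) * (Real.exp (-r * Real.cosh t) * Real.exp (γ * t) +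
        Real.exp (-r * Real.cosh t) * Real.exp (-γ * t))) := by
    funext t; rw [Real.cosh_eq (γ * t)]; ring
  rw [this]
  exact (((integrable_kernel hr γ).add (integrable_kernel hr (-γ))).const_mul _)

set_option maxHeartbeats 1000000 in
lemma besselK_lower {r : ℝ} (hr : 0 < r) {β : ℝ} (hβ : 1 / 2 ≤ β) :
    Real.sqrt (π / (2 * r)) * Real.exp (-r) ≤ besselK β r := by
  rw [kernel_symm hr β]
  have step1 : (∫ t : ℝ, Real.exp (-r * Real.cosh t) * Real.cosh ((1/2 : ℝ) * t)) ≤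
      ∫ t : ℝ, Real.exp (-r * Real.cosh t) * Real.cosh (β * t) := by
    refine integral_mono (integrable_kernel_cosh hr _) (integrable_kernel_cosh hr _) fun t => ?_
    refine mul_le_mul_of_nonneg_left (Real.cosh_le_cosh.2 ?_) (Real.exp_nonneg _)
    rw [abs_mul, abs_mul]
    refine mul_le_mul_of_nonneg_right ?_ (abs_nonneg t)
    rw [abs_of_nonneg (by norm_num : (0:ℝ) ≤ (1/2:ℝ)), abs_of_nonneg (le_trans (by norm_num) hβ)]
    exact hβ
  have cosh_half : ∀ t : ℝ, Real.cosh t = 1 + 2 * Real.sinh (t / 2) ^ 2 := by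
    intro t
    have h := Real.cosh_two_mul (t / 2)
    have h2 := Real.cosh_sq (t / 2)
    rw [show 2 * (t / 2) = t by ring] at h
    rw [h, h2]; ring
  have step2 : (∫ t : ℝ, Real.exp (-r * Real.cosh t) * Real.cosh ((1/2 : ℝ) * t)) =
      2 * ∫ t in Set.Ioi (0:ℝ), Real.exp (-r * Real.cosh t) * Real.cosh ((1/2 : ℝ) * t) := by
    rw [← integral_comp_abs (f := fun t => Real.exp (-r * Real.cosh t) * Real.cosh ((1/2 : ℝ) * t))]
    congr 1; funext t
    rw [Real.cosh_abs, show (1/2 : ℝ) * |t| = |(1/2 : ℝ) * t| by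
      rw [abs_mul, abs_of_nonneg (by norm_num : (0:ℝ) ≤ (1/2:ℝ))], Real.cosh_abs]
  have key : ∀ t : ℝ, ((fun u : ℝ => 2 * Real.exp (-r * (1 + 2 * u ^ 2))) ∘
        (fun t : ℝ => Real.sinh (t / 2))) t * (Real.cosh (t / 2) * (1/2)) =
      Real.exp (-r * Real.cosh t) * Real.cosh ((1/2 : ℝ) * t) := by
    intro t
    simp only [Function.comp_apply]
    rw [show Real.exp (-r * Real.cosh t) = Real.exp (-r * (1 + 2 * Real.sinh (t/2) ^ 2)) by
      rw [← cosh_half t], show (1/2 : ℝ) * t = t / 2 by ring]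
    ring
  have hgint : Integrable (fun u : ℝ => 2 * Real.exp (-r * (1 + 2 * u ^ 2))) := by
    have : (fun u : ℝ => 2 * Real.exp (-r * (1 + 2 * u ^ 2))) =
        (fun u : ℝ => (2 * Real.exp (-r)) * Real.exp (-(2*r) * u ^ 2)) := by
      funext u; rw [mul_assoc, ← Real.exp_add]; ring_nf
    rw [this]
    exact (integrable_exp_neg_mul_sq (by positivity)).const_mul _
  have subst : (∫ t in Set.Ioi (0:ℝ), ((fun u : ℝ => 2 * Real.exp (-r * (1 + 2 * u ^ 2))) ∘
        (fun t : ℝ => Real.sinh (t / 2))) t * (Real.cosh (t / 2) * (1/2))) =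
      ∫ u in Set.Ioi ((0:ℝ)), 2 * Real.exp (-r * (1 + 2 * u ^ 2)) := by
    have h0 : (0:ℝ) = Real.sinh ((0:ℝ) / 2) := by simp
    nth_rewrite 2 [h0]
    refine MeasureTheory.integral_comp_mul_deriv_Ioi (f := fun t => Real.sinh (t/2))
      (f' := fun t => Real.cosh (t/2) * (1/2)) (g := fun u => 2 * Real.exp (-r * (1 + 2 * u ^ 2))) (a := 0)
      ?_ ?_ ?_ ?_ ?_ ?_
    · exact (Real.continuous_sinh.comp (continuous_id.div_const 2)).continuousOn
    · refine tendsto_atTop_mono' atTop ?_ ((tendsto_id.atTop_div_const two_pos))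
      filter_upwards [Filter.eventually_ge_atTop (0:ℝ)] with t ht
      exact Real.self_le_sinh_iff.2 (by positivity)
    · intro x hx
      have : HasDerivAt (fun t : ℝ => Real.sinh (t / 2)) (Real.cosh (x / 2) * (1/2)) x := by
        simpa using ((hasDerivAt_id' x).div_const 2).sinh
      exact this.hasDerivWithinAt
    · exact (by fun_prop : Continuous (fun u : ℝ => 2 * Real.exp (-r * (1 + 2 * u ^ 2)))).continuousOn
    · exact hgint.integrableOn
    · refine (integrable_kernel_cosh hr (1/2)).integrableOn.congr_fun ?_ measurableSet_Ici
      intro t _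
      exact (key t).symm
  have gauss : (∫ u in Set.Ioi ((0:ℝ)), 2 * Real.exp (-r * (1 + 2 * u ^ 2))) =
      Real.sqrt (π / (2 * r)) * Real.exp (-r) := by
    have : (fun u : ℝ => 2 * Real.exp (-r * (1 + 2 * u ^ 2))) =
        (fun u : ℝ => (2 * Real.exp (-r)) * Real.exp (-(2*r) * u ^ 2)) := by
      funext u; rw [mul_assoc, ← Real.exp_add]; ring_nf
    rw [this, MeasureTheory.integral_const_mul, integral_gaussian_Ioi]
    ring
  have step3 : (∫ t in Set.Ioi (0:ℝ), Real.exp (-r * Real.cosh t) * Real.cosh ((1/2 : ℝ) * t)) =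
      Real.sqrt (π / (2 * r)) * Real.exp (-r) := by
    rw [← gauss, ← subst]
    exact MeasureTheory.setIntegral_congr_fun measurableSet_Ioi fun t _ => (key t).symm
  rw [step2, step3] at step1
  linarith

lemma besselK_pos {r : ℝ} (hr : 0 < r) {β : ℝ} (hβ : 1 / 2 ≤ β) : 0 < besselK β r :=
  lt_of_lt_of_le (by positivity) (besselK_lower hr hβ)

lemma besselK_zero {β : ℝ} (hβ : 0 < β) : besselK β 0 = 0 := by
  unfold besselK
  rw [MeasureTheory.integral_undef, mul_zero]
  intro h
  simp only [neg_zero, zero_mul, Real.exp_zero, one_mul] at h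
  have h2 := h.integrableOn (s := Set.Ioi (0:ℝ))
  have h3 : MeasureTheory.IntegrableOn (fun _ : ℝ => (1:ℝ)) (Set.Ioi (0:ℝ)) := by
    refine h2.mono' aestronglyMeasurable_const ?_
    rw [MeasureTheory.ae_restrict_iff' measurableSet_Ioi]
    filter_upwards with t ht
    rw [norm_one]
    exact Real.one_le_exp (mul_nonneg hβ.le (le_of_lt ht))
  rw [MeasureTheory.integrableOn_const_iff] at h3
  rcases h3 with h3 | h3
  · norm_num at h3
  · rw [Real.volume_Ioi] at h3; exact (lt_irrefl _ h3).elim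

/-- ratio bound -/
lemma besselK_ratio {r R β : ℝ} (hr : 0 < r) (hR : π ≤ R) (hβ : 1 ≤ β) :
    besselK β R / besselK β r ≤
      Real.sqrt (r / R) * Real.exp (β ^ 2 / (2 * π)) * Real.exp (r - R) := by
  have hRpos : 0 < R := lt_of_lt_of_le Real.pi_pos hR
  have hβ' : (1:ℝ)/2 ≤ β := by linarith
  have h1 : besselK β R / besselK β r ≤
      (Real.sqrt (π / (2 * R)) * Real.exp (β ^ 2 / (2 * R) - R)) /
        (Real.sqrt (π / (2 * r)) * Real.exp (-r)) := by
    refine div_le_div₀ (by positivity) (besselK_upper hRpos β) (by positivity)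
      (besselK_lower hr hβ')
  have hsqrt : Real.sqrt (π / (2 * R)) = Real.sqrt (r / R) * Real.sqrt (π / (2 * r)) := by
    rw [← Real.sqrt_mul (by positivity)]
    congr 1
    field_simp
  have h2 : (Real.sqrt (π / (2 * R)) * Real.exp (β ^ 2 / (2 * R) - R)) /
        (Real.sqrt (π / (2 * r)) * Real.exp (-r)) =
      Real.sqrt (r / R) * Real.exp (β ^ 2 / (2 * R)) * Real.exp (r - R) := by
    have hs : Real.sqrt (π / (2 * r)) ≠ 0 := by positivity
    have he : Real.exp (β ^ 2 / (2 * R) - R) =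
        Real.exp (β ^ 2 / (2 * R)) * Real.exp (r - R) * Real.exp (-r) := by
      rw [← Real.exp_add, ← Real.exp_add]; congr 1; ring
    rw [hsqrt, he]
    have hex : Real.exp (-r) ≠ 0 := Real.exp_ne_zero _
    field_simp
  have h3 : Real.exp (β ^ 2 / (2 * R)) ≤ Real.exp (β ^ 2 / (2 * π)) := by
    apply Real.exp_le_exp.2
    apply div_le_div_of_nonneg_left (by positivity) (by positivity) (by linarith)
  calc besselK β R / besselK β r ≤ _ := h1
    _ = Real.sqrt (r / R) * Real.exp (β ^ 2 / (2 * R)) * Real.exp (r - R) := h2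
    _ ≤ Real.sqrt (r / R) * Real.exp (β ^ 2 / (2 * π)) * Real.exp (r - R) :=
        mul_le_mul_of_nonneg_right
          (mul_le_mul_of_nonneg_left h3 (Real.sqrt_nonneg _)) (Real.exp_nonneg _)


lemma coord_le_norm {n : ℕ} (x : EuclideanSpace ℝ (Fin n)) (i : Fin n) : |x i| ≤ ‖x‖ := by
  rw [EuclideanSpace.norm_eq]
  have h : |x i| = Real.sqrt (‖x i‖ ^ 2) := by
    rw [Real.norm_eq_abs, Real.sqrt_sq_eq_abs, abs_abs]
  rw [h]
  exact Real.sqrt_le_sqrt (Finset.single_le_sum (f := fun k => ‖x k‖ ^ 2)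
    (fun k _ => by positivity) (Finset.mem_univ i))

lemma eta_coord {n : ℕ} (j : Fin n → ℤ) (ξ : EuclideanSpace ℝ (Fin n)) (i : Fin n) :
    (ξ + (2 * π) • lat n j) i = ξ i + 2 * π * (j i : ℝ) := by
  simp [lat, mul_comm]

lemma geom {n : ℕ} {j : Fin n → ℤ} (hj : j ≠ 0) {ξ : EuclideanSpace ℝ (Fin n)}
    (hξ : ∀ i, |ξ i| < π) :
    ‖ξ‖ < ‖ξ + (2 * π) • lat n j‖ ∧ π ≤ ‖ξ + (2 * π) • lat n j‖ := by
  set η := ξ + (2 * π) • lat n j with hη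
  have hco : ∀ i, η i = ξ i + 2 * π * (j i : ℝ) := fun i => eta_coord j ξ i
  obtain ⟨i₀, hi₀⟩ : ∃ i, j i ≠ 0 := Function.ne_iff.1 hj
  have hpi := Real.pi_pos
  have habs : ∀ i, j i ≠ 0 → π < |η i| := by
    intro i hi
    rw [hco i]
    have h1 : (1:ℝ) ≤ |(j i : ℝ)| := by
      rw [← Int.cast_abs]
      exact_mod_cast Int.one_le_abs hi
    have h2 : 2 * π ≤ |2 * π * (j i : ℝ)| := by
      rw [abs_mul, abs_of_nonneg (by positivity : (0:ℝ) ≤ 2 * π)]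
      nlinarith
    have h3 := hξ i
    have h5 := abs_sub_abs_le_abs_sub (2 * π * (j i : ℝ)) (-(ξ i))
    rw [abs_neg, sub_neg_eq_add] at h5
    have h6 : |ξ i + 2 * π * (j i : ℝ)| = |2 * π * (j i : ℝ) + ξ i| := by rw [add_comm]
    rw [h6]
    linarith
  have hle : ∀ i, |ξ i| ≤ |η i| := by
    intro i
    by_cases hi : j i = 0
    · rw [hco i, hi]; simp
    · exact le_of_lt (lt_trans (hξ i) (habs i hi))
  constructor
  · rw [hη, EuclideanSpace.norm_eq, EuclideanSpace.norm_eq]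
    apply Real.sqrt_lt_sqrt (by positivity)
    refine Finset.sum_lt_sum (fun i _ => ?_) ⟨i₀, Finset.mem_univ i₀, ?_⟩
    · simp only [Real.norm_eq_abs]
      exact pow_le_pow_left₀ (abs_nonneg _) (hle i) 2
    · simp only [Real.norm_eq_abs]
      have ha := habs i₀ hi₀
      have hb := hξ i₀
      nlinarith [abs_nonneg (ξ i₀)]
  · calc π ≤ |η i₀| := le_of_lt (habs i₀ hi₀)
      _ ≤ ‖η‖ := coord_le_norm η i₀

/-- For the multivariate multiquadric family with fixed `α ≥ 1/2`: there is `C`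
independent of `c ≥ 1` such that for `j ∈ ℤⁿ∖{0}` and `ξ ∈ (-π,π)ⁿ`,
`M_{j,c}(ξ) = (‖ξ‖/‖ξ+2πj‖)^{-α-n/2} K_{α+n/2}(c‖ξ+2πj‖)/K_{α+n/2}(c‖ξ‖)` satisfies
`M_{j,c}(ξ) ≤ C (‖ξ‖/‖ξ+2πj‖)^{-α-(n-1)/2} e^{c(‖ξ‖−‖ξ+2πj‖)}`, and hence
`M_{j,c}(ξ) → 0` as `c → ∞`. -/
theorem stmt19 (n : ℕ) (hn : 1 ≤ n) (α : ℝ) (hα : 1 / 2 ≤ α) :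
    ∃ C : ℝ, 0 < C ∧
      (∀ c : ℝ, 1 ≤ c → ∀ j : Fin n → ℤ, j ≠ 0 →
        ∀ ξ : EuclideanSpace ℝ (Fin n), (∀ i, |ξ i| < π) →
          (‖ξ‖ / ‖ξ + (2 * π) • lat n j‖) ^ (-α - (n : ℝ) / 2) *
              (besselK (α + (n : ℝ) / 2) (c * ‖ξ + (2 * π) • lat n j‖) /
                besselK (α + (n : ℝ) / 2) (c * ‖ξ‖)) ≤
            C * (‖ξ‖ / ‖ξ + (2 * π) • lat n j‖) ^ (-α - ((n : ℝ) - 1) / 2) *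
              Real.exp (c * (‖ξ‖ - ‖ξ + (2 * π) • lat n j‖))) ∧
      (∀ j : Fin n → ℤ, j ≠ 0 →
        ∀ ξ : EuclideanSpace ℝ (Fin n), (∀ i, |ξ i| < π) →
          Tendsto (fun c : ℝ =>
              (‖ξ‖ / ‖ξ + (2 * π) • lat n j‖) ^ (-α - (n : ℝ) / 2) *
                (besselK (α + (n : ℝ) / 2) (c * ‖ξ + (2 * π) • lat n j‖) /
                  besselK (α + (n : ℝ) / 2) (c * ‖ξ‖)))
            atTop (nhds 0)) := by
  have hn' : (1:ℝ) ≤ (n:ℝ) := by exact_mod_cast hn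
  have hB1 : 1 ≤ α + (n : ℝ) / 2 := by linarith
  have hpi := Real.pi_pos
  have hne1 : -α - (n : ℝ) / 2 ≠ 0 := by intro h; nlinarith
  have hne2 : -α - ((n : ℝ) - 1) / 2 ≠ 0 := by intro h; nlinarith
  set C := Real.exp ((α + (n : ℝ) / 2) ^ 2 / (2 * π)) with hC
  have key : ∀ c : ℝ, 1 ≤ c → ∀ j : Fin n → ℤ, j ≠ 0 →
      ∀ ξ : EuclideanSpace ℝ (Fin n), (∀ i, |ξ i| < π) →
        (‖ξ‖ / ‖ξ + (2 * π) • lat n j‖) ^ (-α - (n : ℝ) / 2) *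
            (besselK (α + (n : ℝ) / 2) (c * ‖ξ + (2 * π) • lat n j‖) /
              besselK (α + (n : ℝ) / 2) (c * ‖ξ‖)) ≤
          C * (‖ξ‖ / ‖ξ + (2 * π) • lat n j‖) ^ (-α - ((n : ℝ) - 1) / 2) *
            Real.exp (c * (‖ξ‖ - ‖ξ + (2 * π) • lat n j‖)) := by
    intro c hc j hj ξ hξ
    obtain ⟨hlt, hπ⟩ := geom hj hξ
    have hηpos : 0 < ‖ξ + (2 * π) • lat n j‖ := lt_of_lt_of_le hpi hπ
    rcases eq_or_lt_of_le (norm_nonneg ξ) with h0 | h0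
    · rw [← h0, zero_div, Real.zero_rpow hne1, Real.zero_rpow hne2]
      simp
    · have hr : 0 < c * ‖ξ‖ := by nlinarith
      have hR : π ≤ c * ‖ξ + (2 * π) • lat n j‖ := by nlinarith
      have hratio := besselK_ratio hr hR hB1
      have hrR : (c * ‖ξ‖) / (c * ‖ξ + (2 * π) • lat n j‖) =
          ‖ξ‖ / ‖ξ + (2 * π) • lat n j‖ :=
        mul_div_mul_left _ _ (by linarith : c ≠ 0)
      have hdiff : c * ‖ξ‖ - c * ‖ξ + (2 * π) • lat n j‖ =
          c * (‖ξ‖ - ‖ξ + (2 * π) • lat n j‖) := by ring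
      rw [hrR, hdiff] at hratio
      have hQpos : 0 < ‖ξ‖ / ‖ξ + (2 * π) • lat n j‖ := div_pos h0 hηpos
      calc (‖ξ‖ / ‖ξ + (2 * π) • lat n j‖) ^ (-α - (n : ℝ) / 2) *
            (besselK (α + (n : ℝ) / 2) (c * ‖ξ + (2 * π) • lat n j‖) /
              besselK (α + (n : ℝ) / 2) (c * ‖ξ‖))
          ≤ (‖ξ‖ / ‖ξ + (2 * π) • lat n j‖) ^ (-α - (n : ℝ) / 2) *
            (Real.sqrt (‖ξ‖ / ‖ξ + (2 * π) • lat n j‖) * C *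
              Real.exp (c * (‖ξ‖ - ‖ξ + (2 * π) • lat n j‖))) :=
            mul_le_mul_of_nonneg_left hratio (Real.rpow_nonneg hQpos.le _)
        _ = C * (‖ξ‖ / ‖ξ + (2 * π) • lat n j‖) ^ (-α - ((n : ℝ) - 1) / 2) *
              Real.exp (c * (‖ξ‖ - ‖ξ + (2 * π) • lat n j‖)) := by
            rw [Real.sqrt_eq_rpow, show
              (‖ξ‖ / ‖ξ + (2 * π) • lat n j‖) ^ (-α - (n : ℝ) / 2) *
                ((‖ξ‖ / ‖ξ + (2 * π) • lat n j‖) ^ ((1:ℝ)/2) * C *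
                  Real.exp (c * (‖ξ‖ - ‖ξ + (2 * π) • lat n j‖))) =
              ((‖ξ‖ / ‖ξ + (2 * π) • lat n j‖) ^ (-α - (n : ℝ) / 2) *
                (‖ξ‖ / ‖ξ + (2 * π) • lat n j‖) ^ ((1:ℝ)/2)) * C *
                  Real.exp (c * (‖ξ‖ - ‖ξ + (2 * π) • lat n j‖)) by ring,
              ← Real.rpow_add hQpos,
              show -α - (n : ℝ) / 2 + (1:ℝ)/2 = -α - ((n : ℝ) - 1) / 2 by ring]
            ring
  refine ⟨C, Real.exp_pos _, key, ?_⟩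
  intro j hj ξ hξ
  obtain ⟨hlt, hπ⟩ := geom hj hξ
  have hηpos : 0 < ‖ξ + (2 * π) • lat n j‖ := lt_of_lt_of_le hpi hπ
  rcases eq_or_lt_of_le (norm_nonneg ξ) with h0 | h0
  · have : (fun c : ℝ =>
        (‖ξ‖ / ‖ξ + (2 * π) • lat n j‖) ^ (-α - (n : ℝ) / 2) *
          (besselK (α + (n : ℝ) / 2) (c * ‖ξ + (2 * π) • lat n j‖) /
            besselK (α + (n : ℝ) / 2) (c * ‖ξ‖))) = fun _ => (0:ℝ) := by
      funext c
      rw [← h0, zero_div, Real.zero_rpow hne1, zero_mul]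
    rw [this]
    exact tendsto_const_nhds
  · have hd : ‖ξ‖ - ‖ξ + (2 * π) • lat n j‖ < 0 := by linarith
    apply squeeze_zero' (g := fun c : ℝ =>
      (C * (‖ξ‖ / ‖ξ + (2 * π) • lat n j‖) ^ (-α - ((n : ℝ) - 1) / 2)) *
        Real.exp (c * (‖ξ‖ - ‖ξ + (2 * π) • lat n j‖)))
    · filter_upwards with c
      exact mul_nonneg (Real.rpow_nonneg (div_nonneg (norm_nonneg _) (norm_nonneg _)) _)
        (div_nonneg (besselK_nonneg _ _) (besselK_nonneg _ _))
    · filter_upwards [eventually_ge_atTop (1:ℝ)] with c hc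
      have := key c hc j hj ξ hξ
      linarith [this]
    · have h1 : Tendsto (fun c : ℝ => c * (‖ξ‖ - ‖ξ + (2 * π) • lat n j‖)) atTop atBot :=
        Tendsto.atTop_mul_const_of_neg hd tendsto_id
      have h2 := Real.tendsto_exp_atBot.comp h1
      have h3 := h2.const_mul (C * (‖ξ‖ / ‖ξ + (2 * π) • lat n j‖) ^ (-α - ((n : ℝ) - 1) / 2))
      simpa using h3

end
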